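/- Let r ≥ 2 be an integer, let x = (x_1,…,x_r) ∈ ℝ^r, and let a = (a_1,…,a_r) and a' = (a_1',…,a_r') be vectors of nonzero real numbers with a_q a_p' − a_p a_q' ≠ 0 for all p ≠ q. Then Σ_{p=1}^r ζ_fml(−1, (a_q/a_p − a_q'/a_p')_{q ≠ p}, (x_q)_{q ≠ p}) = ζ_fml(0, a', x) − ζ_fml(0, a, x), where (y_q)_{q ≠ p} denotes the (r−1)-dimensional vector obtained by deleting the p-th coordinate. -/

import Mathlib

open scoped BigOperators

/-- The formal multiple zeta value `zetaFml m a x = ζ_fml(1 - m, a, x)` of the paper: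
`(-1)^r (m-1)! ∑_{l, Σ l i = m + r - 1} ∏_i B_{l i}(x i) * (a i)^(l i - 1) / (l i)!`,
where `B_l` is the `l`-th Bernoulli polynomial (normalized with `B₁(X) = X - 1/2`)
and `(a i)^(l i - 1)` is an integer (`zpow`) power. -/
noncomputable def zetaFml (m : ℕ) {r : ℕ} (a x : Fin r → ℝ) : ℝ :=
  (-1 : ℝ) ^ r * (Nat.factorial (m - 1)) *
    ∑ l ∈ Finset.Nat.antidiagonalTuple r (m + r - 1),
      ∏ i, Polynomial.aeval (x i) (Polynomial.bernoulli (l i)) * a i ^ ((l i : ℤ) - 1)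
        / (Nat.factorial (l i))


open Polynomial Finset

lemma pf_eval_zero {ι : Type*} [DecidableEq ι] (s : Finset ι) (z : ι → ℝ)
    (hinj : Set.InjOn z s) (N : ℝ[X]) (hdeg : N.natDegree ≤ s.card) :
    N.eval 0 = N.coeff s.card * ∏ p ∈ s, (0 - z p)
      + ∑ p ∈ s, N.eval (z p) * ∏ q ∈ s.erase p, ((0 - z q) / (z p - z q)) := by
  classical
  set k := s.card with hk
  set D : ℝ[X] := ∏ p ∈ s, (X - C (z p)) with hD
  have hDdeg : D.natDegree = k := by
    rw [hD, natDegree_prod_of_monic s _ (fun p _ => monic_X_sub_C (z p))]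
    simp [hk]
  have hDmonic : D.Monic := monic_prod_of_monic _ _ fun p _ => monic_X_sub_C _
  have hDk : D.coeff k = 1 := by rw [← hDdeg]; exact hDmonic.coeff_natDegree
  set M : ℝ[X] := N - C (N.coeff k) * D with hM
  have hMdeg : M.degree < (s.card : ℕ) := by
    rw [degree_lt_iff_coeff_zero]
    intro m hm
    rcases eq_or_lt_of_le hm with h | h
    · rw [← h, ← hk]; simp [hM, hDk, coeff_C_mul]
    · have h1 : N.coeff m = 0 := coeff_eq_zero_of_natDegree_lt (lt_of_le_of_lt hdeg h)
      have h2 : D.coeff m = 0 := coeff_eq_zero_of_natDegree_lt (by rw [hDdeg]; exact h)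
      simp [hM, h1, h2, coeff_C_mul]
  have hint := Lagrange.eq_interpolate (f := M) hinj hMdeg
  have hDz : ∀ p ∈ s, D.eval (z p) = 0 := by
    intro p hp
    rw [hD, eval_prod]
    exact prod_eq_zero hp (by simp)
  have hMz : ∀ p ∈ s, M.eval (z p) = N.eval (z p) := by
    intro p hp
    simp [hM, hDz p hp]
  have hbasis : ∀ p ∈ s, eval 0 (Lagrange.basis s z p)
      = ∏ q ∈ s.erase p, ((0 - z q) / (z p - z q)) := by
    intro p hp
    rw [Lagrange.basis, eval_prod]
    refine prod_congr rfl fun q hq => ?_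
    rw [Lagrange.basisDivisor]
    simp [div_eq_inv_mul]
  have := congrArg (eval 0) hint
  rw [Lagrange.interpolate_apply, eval_finset_sum] at this
  have hM0 : M.eval 0 = ∑ p ∈ s, N.eval (z p) * ∏ q ∈ s.erase p, ((0 - z q) / (z p - z q)) := by
    rw [this]
    refine sum_congr rfl fun p hp => ?_
    rw [eval_mul, eval_C, hMz p hp, hbasis p hp]
  have hD0 : D.eval 0 = ∏ p ∈ s, (0 - z p) := by rw [hD, eval_prod]; simp
  have : N.eval 0 = M.eval 0 + N.coeff k * D.eval 0 := by
    simp only [hM, eval_sub, eval_mul, eval_C]; ring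
  rw [this, hM0, hD0]; ring

lemma star_aux (r : ℕ) (a a' : Fin (r + 2) → ℝ) (ha : ∀ i, a i ≠ 0) (ha' : ∀ i, a' i ≠ 0)
    (hnd : ∀ p q : Fin (r + 2), p ≠ q → a q * a' p - a p * a' q ≠ 0)
    (l : Fin (r + 2) → ℕ) (hl : ∑ i, l i = r + 2) :
    (∏ i, a i ^ ((l i : ℤ) - 1)) - (∏ i, a' i ^ ((l i : ℤ) - 1))
      = ∑ p ∈ univ.filter (fun p => l p = 0),
          ∏ i ∈ univ.erase p, (a i / a p - a' i / a' p) ^ ((l i : ℤ) - 1) := by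
  classical
  set Z : Finset (Fin (r + 2)) := univ.filter (fun p => l p = 0) with hZ
  have hmemZ : ∀ p, p ∈ Z ↔ l p = 0 := by intro p; simp [hZ]
  have hmemZc : ∀ q, q ∈ Zᶜ ↔ l q ≠ 0 := by intro q; simp [hZ]
  -- nonvanishing facts
  have hb_eq : ∀ p q : Fin (r + 2),
      a q / a p - a' q / a' p = (a q * a' p - a p * a' q) / (a p * a' p) := by
    intro p q
    rw [div_sub_div _ _ (ha p) (ha' p), div_eq_div_iff (mul_ne_zero (ha p) (ha' p)) (mul_ne_zero (ha p) (ha' p))]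
    try ring
  have hbne : ∀ p q : Fin (r + 2), p ≠ q → a q / a p - a' q / a' p ≠ 0 := by
    intro p q h
    rw [hb_eq]
    exact div_ne_zero (hnd p q h) (mul_ne_zero (ha p) (ha' p))
  set z : Fin (r + 2) → ℝ := fun p => -(a p / a' p) with hz
  have hzne : ∀ p q : Fin (r + 2), p ≠ q → z p ≠ z q := by
    intro p q h hEq
    apply hnd p q h
    simp only [hz, neg_inj] at hEq
    rw [div_eq_div_iff (ha' p) (ha' q)] at hEq
    linarith
  have hzinj : Set.InjOn z ↑Z := by
    intro p _ q _ h
    by_contra hpq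
    exact hzne p q hpq h
  set m : Fin (r + 2) → ℕ := fun q => l q - 1 with hm
  set k := Z.card with hk
  have hlge : ∀ q ∈ Zᶜ, 1 ≤ l q := by
    intro q hq; have := (hmemZc q).1 hq; omega
  have hkm : ∑ q ∈ Zᶜ, m q = k := by
    have h2 : ∑ q ∈ Z, l q + ∑ q ∈ Zᶜ, l q = r + 2 := by
      rw [Finset.sum_add_sum_compl, hl]
    have h2' : ∑ q ∈ Z, l q = 0 := by
      apply Finset.sum_eq_zero; intro q hq; exact (hmemZ q).1 hq
    have h3 : ∑ q ∈ Zᶜ, m q + Zᶜ.card = ∑ q ∈ Zᶜ, l q := by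
      rw [Finset.card_eq_sum_ones, ← Finset.sum_add_distrib]
      exact Finset.sum_congr rfl fun q hq => by
        have h5 := hlge q hq; have h6 : m q = l q - 1 := rfl; omega
    have h4 : k + Zᶜ.card = r + 2 := by
      rw [hk, Finset.card_add_card_compl]
      simp
    omega
  have hml : ∀ q ∈ Zᶜ, ((l q : ℤ) - 1) = ((m q : ℕ) : ℤ) := by
    intro q hq; have h5 := hlge q hq
    have : (m q) + 1 = l q := by have h6 : m q = l q - 1 := rfl; omega
    push_cast [← this]; ring
  -- the polynomial
  set N : ℝ[X] := ∏ q ∈ Zᶜ, (C (a' q) * X + C (a q)) ^ (m q) with hN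
  have hfac_ne : ∀ q : Fin (r + 2), (C (a' q) * X + C (a q)) ≠ 0 := by
    intro q h
    have := degree_linear (b := a q) (ha' q)
    rw [h] at this
    simp at this
  have hNdeg : N.natDegree = k := by
    rw [hN, natDegree_prod _ _ (fun q _ => pow_ne_zero _ (hfac_ne q))]
    rw [Finset.sum_congr rfl (fun q _ => by rw [natDegree_pow, natDegree_linear (ha' q), mul_one])]
    exact hkm
  have hNcoeff : N.coeff k = ∏ q ∈ Zᶜ, a' q ^ m q := by
    rw [← hNdeg, coeff_natDegree, hN, leadingCoeff_prod]
    exact Finset.prod_congr rfl fun q _ => by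
      rw [leadingCoeff_pow, leadingCoeff_linear (ha' q)]
  have hNeval : ∀ t : ℝ, N.eval t = ∏ q ∈ Zᶜ, (a' q * t + a q) ^ m q := by
    intro t; rw [hN, eval_prod]; simp
  have key := pf_eval_zero Z z hzinj N (le_of_eq hNdeg)
  have hN0 : N.eval 0 = ∏ q ∈ Zᶜ, a q ^ m q := by
    rw [hNeval]; refine Finset.prod_congr rfl fun q _ => by rw [mul_zero, zero_add]
  have hA : ∀ (c : Fin (r + 2) → ℝ),
      (∏ i, c i ^ ((l i : ℤ) - 1)) = (∏ q ∈ Zᶜ, c q ^ m q) * ∏ p ∈ Z, (c p)⁻¹ := by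
    intro c
    rw [← Finset.prod_compl_mul_prod Z (fun i => c i ^ ((l i : ℤ) - 1))]
    congr 1
    · exact Finset.prod_congr rfl fun q hq => by rw [hml q hq, zpow_natCast]
    · refine Finset.prod_congr rfl fun p hp => ?_
      rw [(hmemZ p).1 hp]
      norm_num
  have hP : (∏ p ∈ Z, (0 - z p)) * ∏ p ∈ Z, (a p)⁻¹ = ∏ p ∈ Z, (a' p)⁻¹ := by
    rw [← Finset.prod_mul_distrib]
    refine Finset.prod_congr rfl fun p _ => ?_
    have h1 := ha p; have h2 := ha' p
    simp only [hz, zero_sub, neg_neg]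
    field_simp
  have hterm : ∀ p ∈ Z,
      N.eval (z p) * (∏ q ∈ Z.erase p, ((0 - z q) / (z p - z q))) * ∏ s ∈ Z, (a s)⁻¹
      = (∏ q ∈ Zᶜ, (a q / a p - a' q / a' p) ^ m q)
          * ∏ q ∈ Z.erase p, (a q / a p - a' q / a' p)⁻¹ := by
    intro p hp
    have hap := ha p; have ha'p := ha' p
    have h1 : N.eval (z p) = (a p) ^ k * ∏ q ∈ Zᶜ, (a q / a p - a' q / a' p) ^ m q := by
      rw [hNeval]
      have hpt : ∀ q ∈ Zᶜ, (a' q * z p + a q) ^ m q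
          = ((a p) ^ m q) * (a q / a p - a' q / a' p) ^ m q := by
        intro q hq
        rw [← mul_pow]
        congr 1
        simp only [hz]
        field_simp
        ring
      rw [Finset.prod_congr rfl hpt, Finset.prod_mul_distrib, Finset.prod_pow_eq_pow_sum, hkm]
    have h2 : ∀ q ∈ Z.erase p, (0 - z q) / (z p - z q)
        = a q * (a p)⁻¹ * (a q / a p - a' q / a' p)⁻¹ := by
      intro q hq
      have hqp : q ≠ p := (Finset.mem_erase.1 hq).1
      have hΔ : a q * a' p - a p * a' q ≠ 0 := hnd p q hqp.symm
      have hΔ' : a q * a' p - a' q * a p ≠ 0 := by intro h; apply hΔ; linarith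
      have haq := ha q; have ha'q := ha' q
      have e1 : z p - z q = (a q * a' p - a' q * a p) / (a' q * a' p) := by
        have e0 : z p - z q = a q / a' q - a p / a' p := by simp only [hz]; ring
        rw [e0, div_sub_div _ _ (ha' q) (ha' p)]
      have e2 : (0:ℝ) - z q = a q / a' q := by simp only [hz]; ring
      rw [e1, e2, hb_eq]
      field_simp
    rw [h1, Finset.prod_congr rfl h2, Finset.prod_mul_distrib, Finset.prod_mul_distrib,
      Finset.prod_const, Finset.card_erase_of_mem hp]
    rw [← Finset.mul_prod_erase Z _ hp, ← hk]
    have hPa : (∏ q ∈ Z.erase p, a q) * ∏ q ∈ Z.erase p, (a q)⁻¹ = 1 := by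
      rw [← Finset.prod_mul_distrib]
      exact Finset.prod_eq_one fun q _ => mul_inv_cancel₀ (ha q)
    obtain ⟨j, hj⟩ : ∃ j, k = j + 1 :=
      ⟨k - 1, (Nat.succ_pred_eq_of_pos (Finset.card_pos.2 ⟨p, hp⟩)).symm⟩
    rw [hj]
    simp only [Nat.add_sub_cancel]
    generalize (∏ q ∈ Zᶜ, (a q / a p - a' q / a' p) ^ m q) = Bc
    generalize (∏ q ∈ Z.erase p, (a q / a p - a' q / a' p)⁻¹) = Bz
    generalize hg1 : (∏ q ∈ Z.erase p, a q) = Pa at hPa ⊢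
    generalize hg2 : (∏ q ∈ Z.erase p, (a q)⁻¹) = Pai at hPa ⊢
    have hxx : (a p) ^ (j + 1) * (((a p)⁻¹) ^ j * (a p)⁻¹) = 1 := by
      rw [inv_pow, ← mul_inv, ← pow_succ]
      exact mul_inv_cancel₀ (pow_ne_zero _ hap)
    calc (a p) ^ (j + 1) * Bc * (Pa * ((a p)⁻¹) ^ j * Bz) * ((a p)⁻¹ * Pai)
        = ((a p) ^ (j + 1) * (((a p)⁻¹) ^ j * (a p)⁻¹)) * ((Pa * Pai) * (Bc * Bz)) := by ring
      _ = Bc * Bz := by rw [hxx, hPa, one_mul, one_mul]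
  have hRHS : ∀ p ∈ Z, (∏ i ∈ univ.erase p, (a i / a p - a' i / a' p) ^ ((l i : ℤ) - 1))
      = (∏ q ∈ Zᶜ, (a q / a p - a' q / a' p) ^ m q)
          * ∏ q ∈ Z.erase p, (a q / a p - a' q / a' p)⁻¹ := by
    intro p hp
    have hp0 : l p = 0 := (hmemZ p).1 hp
    have hsplit : univ.erase p = Zᶜ ∪ Z.erase p := by
      ext i
      simp only [Finset.mem_erase, Finset.mem_union, Finset.mem_compl, Finset.mem_univ,
        and_true, hmemZ, hmemZc]
      constructor
      · intro h
        by_cases h0 : l i = 0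
        · exact Or.inr ⟨h, h0⟩
        · exact Or.inl h0
      · rintro (h | ⟨h, _⟩)
        · intro hip; rw [hip] at h; exact h hp0
        · exact h
    have hdisj : Disjoint (Zᶜ) (Z.erase p) := by
      rw [Finset.disjoint_left]
      intro q hq hq2
      exact absurd (Finset.mem_of_mem_erase hq2) (Finset.mem_compl.1 hq)
    rw [hsplit, Finset.prod_union hdisj]
    congr 1
    · exact Finset.prod_congr rfl fun q hq => by rw [hml q hq, zpow_natCast]
    · refine Finset.prod_congr rfl fun q hq => ?_
      rw [(hmemZ q).1 (Finset.mem_of_mem_erase hq)]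
      norm_num
  rw [hA a, hA a', ← hN0, ← hNcoeff, key, add_mul, mul_assoc, hP, Finset.sum_mul,
    add_sub_cancel_left]
  exact Finset.sum_congr rfl fun p hp => by rw [hterm p hp, hRHS p hp]

lemma prod_succAbove {M : Type*} [CommMonoid M] {n : ℕ} (p : Fin (n + 1)) (f : Fin (n + 1) → M) :
    ∏ q : Fin n, f (p.succAbove q) = ∏ i ∈ univ.erase p, f i := by
  rw [← Finset.compl_singleton, ← Fin.image_succAbove_univ p,
    Finset.prod_image (fun x _ y _ h => p.succAbove_right_injective h)]

lemma sum_tuple_delete {n N : ℕ} (p : Fin (n + 1)) (F : (Fin (n + 1) → ℕ) → ℝ) :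
    ∑ l ∈ Finset.Nat.antidiagonalTuple n N, F (p.insertNth 0 l)
      = ∑ l ∈ (Finset.Nat.antidiagonalTuple (n + 1) N).filter (fun l => l p = 0), F l := by
  refine Finset.sum_nbij' (i := fun l' => p.insertNth 0 l')
    (j := fun l q => l (p.succAbove q)) ?_ ?_ ?_ ?_ ?_
  · intro l' hl'
    rw [Finset.Nat.mem_antidiagonalTuple] at hl'
    rw [Finset.mem_filter, Finset.Nat.mem_antidiagonalTuple]
    refine ⟨?_, by simp⟩
    rw [Fin.sum_univ_succAbove _ p]
    simpa using hl'
  · intro l hl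
    rw [Finset.mem_filter, Finset.Nat.mem_antidiagonalTuple] at hl
    rw [Finset.Nat.mem_antidiagonalTuple]
    have h := Fin.sum_univ_succAbove l p
    have h2 : ∑ q, l (p.succAbove q) = N := by omega
    exact h2
  · intro l' _
    funext q
    exact Fin.insertNth_apply_succAbove (α := fun _ => ℕ) p 0 l' q
  · intro l hl
    rw [Finset.mem_filter] at hl
    have h0 : l p = 0 := hl.2
    show p.insertNth 0 (fun q => l (p.succAbove q)) = l
    have : (fun q => l (p.succAbove q)) = Fin.removeNth p l := rfl
    rw [this, ← h0, Fin.insertNth_self_removeNth]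
  · intro l' _
    rfl

set_option maxHeartbeats 1000000 in
/-- with nonzero `a`, `a'` satisfying `a_q a'_p - a_p a'_q ≠ 0` for `p ≠ q`,
`∑_p ζ_fml(-1, (a_q/a_p - a'_q/a'_p)_{q ≠ p}, (x_q)_{q ≠ p}) = ζ_fml(0, a', x) - ζ_fml(0, a, x)`.
Here `ζ_fml(-1, ·, ·) = zetaFml 2` and `ζ_fml(0, ·, ·) = zetaFml 1`. -/
theorem zetaFml_sum_deleted (r : ℕ) (a a' x : Fin (r + 2) → ℝ)
    (ha : ∀ i, a i ≠ 0) (ha' : ∀ i, a' i ≠ 0)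
    (hnd : ∀ p q : Fin (r + 2), p ≠ q → a q * a' p - a p * a' q ≠ 0) :
    ∑ p : Fin (r + 2),
        zetaFml 2 (fun q : Fin (r + 1) => a (p.succAbove q) / a p - a' (p.succAbove q) / a' p)
          (fun q : Fin (r + 1) => x (p.succAbove q))
      = zetaFml 1 a' x - zetaFml 1 a x := by
  classical
  unfold zetaFml
  norm_num
  simp only [show (2:ℕ) + r = r + 2 from Nat.add_comm 2 r]
  have key : ∀ p : Fin (r + 2),
      (∑ l ∈ Finset.Nat.antidiagonalTuple (r + 1) (r + 2),
        (∏ q : Fin (r + 1),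
            (Polynomial.aeval (x (p.succAbove q))) (Polynomial.bernoulli (l q)) *
              (a (p.succAbove q) / a p - a' (p.succAbove q) / a' p) ^ ((l q : ℤ) - 1)) /
          ∏ q : Fin (r + 1), ((l q).factorial : ℝ))
      = ∑ l ∈ (Finset.Nat.antidiagonalTuple (r + 2) (r + 2)).filter (fun l => l p = 0),
          ((∏ i, (Polynomial.aeval (x i)) (Polynomial.bernoulli (l i))) /
              ∏ i, ((l i).factorial : ℝ)) *
            ∏ i ∈ univ.erase p, (a i / a p - a' i / a' p) ^ ((l i : ℤ) - 1) := by
    intro p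
    rw [← sum_tuple_delete p (fun l =>
      ((∏ i, (Polynomial.aeval (x i)) (Polynomial.bernoulli (l i))) /
          ∏ i, ((l i).factorial : ℝ)) *
        ∏ i ∈ univ.erase p, (a i / a p - a' i / a' p) ^ ((l i : ℤ) - 1))]
    refine Finset.sum_congr rfl fun l' _ => ?_
    set L : Fin (r + 2) → ℕ := p.insertNth 0 l' with hL
    have e1 : (∏ i : Fin (r + 2), (Polynomial.aeval (x i)) (Polynomial.bernoulli (L i)))
        = ((Polynomial.aeval (x p)) (Polynomial.bernoulli (L p))) *
          ∏ q : Fin (r + 1), (Polynomial.aeval (x (p.succAbove q)))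
            (Polynomial.bernoulli (L (p.succAbove q))) :=
      Fin.prod_univ_succAbove (n := r + 1)
        (fun i => (Polynomial.aeval (x i)) (Polynomial.bernoulli (L i))) p
    have e2 : (∏ i : Fin (r + 2), ((L i).factorial : ℝ))
        = ((L p).factorial : ℝ) *
          ∏ q : Fin (r + 1), ((L (p.succAbove q)).factorial : ℝ) :=
      Fin.prod_univ_succAbove (n := r + 1) (fun i => ((L i).factorial : ℝ)) p
    have e3 : (∏ i ∈ univ.erase p, (a i / a p - a' i / a' p) ^ ((L i : ℤ) - 1))
        = ∏ q : Fin (r + 1), (a (p.succAbove q) / a p - a' (p.succAbove q) / a' p)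
            ^ ((L (p.succAbove q) : ℤ) - 1) :=
      (prod_succAbove (n := r + 1) p
        (fun i => (a i / a p - a' i / a' p) ^ ((L i : ℤ) - 1))).symm
    rw [e1, e2, e3]
    simp only [hL, Fin.insertNth_apply_same, Fin.insertNth_apply_succAbove]
    rw [Finset.prod_mul_distrib]
    simp [Polynomial.bernoulli_zero]
    ring
  simp only [key]
  rw [← Finset.mul_sum]
  have swap : (∑ p : Fin (r + 2), ∑ l ∈ (Finset.Nat.antidiagonalTuple (r + 2) (r + 2)).filter
        (fun l => l p = 0),
          ((∏ i, (Polynomial.aeval (x i)) (Polynomial.bernoulli (l i))) /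
              ∏ i, ((l i).factorial : ℝ)) *
            ∏ i ∈ univ.erase p, (a i / a p - a' i / a' p) ^ ((l i : ℤ) - 1))
      = ∑ l ∈ Finset.Nat.antidiagonalTuple (r + 2) (r + 2),
          ((∏ i, (Polynomial.aeval (x i)) (Polynomial.bernoulli (l i))) /
              ∏ i, ((l i).factorial : ℝ)) *
            ((∏ i, a i ^ ((l i : ℤ) - 1)) - ∏ i, a' i ^ ((l i : ℤ) - 1)) := by
    simp_rw [Finset.sum_filter]
    rw [Finset.sum_comm]
    refine Finset.sum_congr rfl fun l hl => ?_
    rw [← Finset.sum_filter, ← Finset.mul_sum,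
      ← star_aux r a a' ha ha' hnd l (Finset.Nat.mem_antidiagonalTuple.1 hl)]
  rw [swap]
  have conv : ∀ c : Fin (r + 2) → ℝ,
      (∑ l ∈ Finset.Nat.antidiagonalTuple (r + 2) (r + 2),
        (∏ i, (Polynomial.aeval (x i)) (Polynomial.bernoulli (l i)) * c i ^ ((l i : ℤ) - 1)) /
          ∏ i, ((l i).factorial : ℝ))
      = ∑ l ∈ Finset.Nat.antidiagonalTuple (r + 2) (r + 2),
          ((∏ i, (Polynomial.aeval (x i)) (Polynomial.bernoulli (l i))) /
              ∏ i, ((l i).factorial : ℝ)) * ∏ i, c i ^ ((l i : ℤ) - 1) := by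
    intro c
    refine Finset.sum_congr rfl fun l _ => ?_
    rw [Finset.prod_mul_distrib]
    ring
  rw [conv a', conv a]
  simp only [mul_sub]
  rw [Finset.sum_sub_distrib]
  rw [pow_succ]
  ring
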